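/- Let q be an odd prime, let D be the regular q^{n-m} design with generators (c_{ij}), and let E_{b*} = W(D_{b*}). Then E_{b*} is mirror-symmetric: a vector y = (y_1,...,y_n) ∈ Z_q^n occurs as a row of E_{b*} if and only if ((q-1)-y_1, ..., (q-1)-y_n) occurs as a row of E_{b*}. -/

import Mathlib

open Finset Real

/-- The Williams transformation on natural-number representatives of `Z_q`:
`W(x) = 2x` if `0 ≤ x < q/2` and `W(x) = 2(q-x) - 1` if `q/2 ≤ x < q`. -/
def Wnat (q x : ℕ) : ℕ := if 2 * x < q then 2 * x else 2 * (q - x) - 1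

/-- The Williams transformation on `ZMod q`, applied to the canonical
representative in `{0, 1, ..., q-1}`. -/
def Wz (q : ℕ) (x : ZMod q) : ZMod q := (Wnat q x.val : ZMod q)

/-- `γ = (q-1)/4` if `q ≡ 1 (mod 4)` and `γ = (3q-1)/4` if `q ≡ 3 (mod 4)`. -/
def gammaNat (q : ℕ) : ℕ := if q % 4 = 1 then (q - 1) / 4 else (3 * q - 1) / 4

/-- The regular `q^{n-m}` design with `k = n - m` independent columns and `m` dependent
columns with generator coefficients `c`.  Rows are indexed by the full factorial
`Fin k → ZMod q`; columns are indexed by `Fin k ⊕ Fin m`, where `Sum.inl j` is the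
independent column `x_j` and `Sum.inr i` is the dependent column `∑ j, c i j * x_j`. -/
def regDesign {q k m : ℕ} (c : Fin m → Fin k → ZMod q) :
    (Fin k → ZMod q) → Fin k ⊕ Fin m → ZMod q :=
  fun x => Sum.elim x fun i => ∑ j, c i j * x j

/-- The design `D_b`, obtained from the regular design by adding `b_i` to the `i`-th
dependent column. -/
def regDesignB {q k m : ℕ} (c : Fin m → Fin k → ZMod q) (b : Fin m → ZMod q) :
    (Fin k → ZMod q) → Fin k ⊕ Fin m → ZMod q :=
  fun x => Sum.elim x fun i => (∑ j, c i j * x j) + b i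

/-- The design `E_b = W(D_b)`, obtained by applying the Williams transformation to
every entry of `D_b`. -/
def Eb {q k m : ℕ} (c : Fin m → Fin k → ZMod q) (b : Fin m → ZMod q) :
    (Fin k → ZMod q) → Fin k ⊕ Fin m → ZMod q :=
  fun x col => Wz q (regDesignB c b x col)

/-- The permutation vector `b*` with `b*_i = (1 - ∑ j, c i j) * γ (mod q)`. -/
def bstar {q k m : ℕ} (c : Fin m → Fin k → ZMod q) : Fin m → ZMod q :=
  fun i => (1 - ∑ j, c i j) * (gammaNat q : ZMod q)

/-- A family of orthonormal polynomials on `Z_q`: `p_0 ≡ 1`, `p_j` has degree exactly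
`j` for `j < q`, and `∑_{x=0}^{q-1} p_i(x) p_j(x)` equals `q` if `i = j` and `0`
otherwise. -/
def IsOrthonormalFamily (q : ℕ) (p : ℕ → Polynomial ℝ) : Prop :=
  p 0 = 1 ∧ (∀ j < q, (p j).degree = j) ∧
    ∀ i < q, ∀ j < q,
      (∑ x ∈ Finset.range q, (p i).eval (x : ℝ) * (p j).eval (x : ℝ)) =
        if i = j then (q : ℝ) else 0

/-- The `β`-wordlength pattern value
`β_k(A) = N⁻² ∑_{u : u₁+⋯+uₙ = k} (∑ᵢ ∏ⱼ p_{uⱼ}(aᵢⱼ))²`. -/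
noncomputable def betaWL {Row Col : Type*} [Fintype Row] [Fintype Col] [DecidableEq Col]
    (q : ℕ) (p : ℕ → Polynomial ℝ) (k : ℕ) (A : Row → Col → ZMod q) : ℝ :=
  ((Fintype.card Row : ℝ) ^ 2)⁻¹ *
    ∑ u ∈ Finset.univ.filter (fun u : Col → Fin q => (∑ j, (u j : ℕ)) = k),
      (∑ i : Row, ∏ j : Col, (p (u j : ℕ)).eval ((A i j).val : ℝ)) ^ 2

/-- Theorem 4: For an odd prime `q`, the design `E_{b*} = W(D_{b*})`
is mirror-symmetric: a vector `y` occurs as a row of `E_{b*}` if and only if the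
vector `(q-1) - y` (entrywise, i.e. `-1 - y` in `ZMod q`) occurs as a row of
`E_{b*}`. -/

lemma two_gamma_eq (q : ℕ) (hq : q.Prime) (hodd : Odd q) :
    ((gammaNat q : ZMod q) + gammaNat q) = (((q-1)/2 : ℕ) : ZMod q) := by
  have h2 : q % 2 = 1 := Nat.odd_iff.mp hodd
  have h3 : 3 ≤ q := by have := hq.two_le; omega
  have h4 : q % 4 = 1 ∨ q % 4 = 3 := by omega
  rcases h4 with h4 | h4
  · have hg : gammaNat q = (q-1)/4 := by simp [gammaNat, h4]
    have hn : (q-1)/4 + (q-1)/4 = (q-1)/2 := by omega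
    rw [hg, ← Nat.cast_add, hn]
  · have hg : gammaNat q = (3*q-1)/4 := by simp [gammaNat, h4]
    have hn : (3*q-1)/4 + (3*q-1)/4 = q + (q-1)/2 := by omega
    rw [hg, ← Nat.cast_add, hn, Nat.cast_add, ZMod.natCast_self, zero_add]

lemma Wz_mirror (q : ℕ) [NeZero q] (hq : q.Prime) (hodd : Odd q) (z : ZMod q) :
    Wz q ((((q-1)/2 : ℕ) : ZMod q) - z) = -1 - Wz q z := by
  have h2 : q % 2 = 1 := Nat.odd_iff.mp hodd
  have h3 : 3 ≤ q := by have := hq.two_le; omega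
  set g := (q-1)/2 with hgdef
  have ha : z.val < q := ZMod.val_lt z
  set a := z.val with hadef
  have hz : (a : ZMod q) = z := by rw [hadef, ZMod.natCast_val, ZMod.cast_id]
  by_cases hle : a ≤ g
  · have e1 : ((g : ℕ) : ZMod q) - z = ((g - a : ℕ) : ZMod q) := by
      rw [Nat.cast_sub hle, hz]
    rw [e1]
    unfold Wz
    rw [ZMod.val_cast_of_lt (by omega : g - a < q)]
    unfold Wnat
    rw [if_pos (by omega : 2*(g-a) < q), if_pos (by omega : 2*a < q)]
    have hnat : 2*(g-a) + (2*a + 1) = q := by omega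
    have := congrArg (Nat.cast : ℕ → ZMod q) hnat
    push_cast at this
    rw [ZMod.natCast_self] at this
    push_cast
    linear_combination this
  · have haq : a ≤ g + q := by omega
    have e1 : ((g : ℕ) : ZMod q) - z = ((g + q - a : ℕ) : ZMod q) := by
      rw [Nat.cast_sub haq, Nat.cast_add, ZMod.natCast_self, add_zero, hz]
    rw [e1]
    unfold Wz
    rw [ZMod.val_cast_of_lt (by omega : g + q - a < q)]
    unfold Wnat
    rw [if_neg (by omega : ¬ 2*(g+q-a) < q), if_neg (by omega : ¬ 2*a < q)]
    have hnat : (2*(q - (g+q-a)) - 1) + ((2*(q-a) - 1) + 1) = q := by omega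
    have := congrArg (Nat.cast : ℕ → ZMod q) hnat
    push_cast [Nat.cast_sub (by omega : 1 ≤ 2*(q - (g+q-a))),
      Nat.cast_sub (by omega : 1 ≤ 2*(q-a)),
      Nat.cast_sub (by omega : g+q-a ≤ q),
      Nat.cast_sub (by omega : a ≤ q)] at this
    rw [ZMod.natCast_self] at this
    rw [← hadef]
    push_cast [Nat.cast_sub (by omega : 1 ≤ 2*(q - (g+q-a))),
      Nat.cast_sub (by omega : 1 ≤ 2*(q-a)),
      Nat.cast_sub (by omega : g+q-a ≤ q),
      Nat.cast_sub (by omega : a ≤ q)]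
    rw [ZMod.natCast_self]
    linear_combination this

theorem statement2 (q n m : ℕ) [NeZero q] (hq : q.Prime) (hodd : Odd q)
    (hm : 1 ≤ m) (hmn : m < n) (c : Fin m → Fin (n - m) → ZMod q)
    (y : Fin (n - m) ⊕ Fin m → ZMod q) :
    (∃ x, ∀ col, Eb c (bstar c) x col = y col) ↔
      (∃ x, ∀ col, Eb c (bstar c) x col = -1 - y col) := by
  have key : ∀ y : Fin (n - m) ⊕ Fin m → ZMod q,
      (∃ x, ∀ col, Eb c (bstar c) x col = y col) →
      (∃ x, ∀ col, Eb c (bstar c) x col = -1 - y col) := by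
    rintro y ⟨x, hx⟩
    set g : ZMod q := (((q-1)/2 : ℕ) : ZMod q) with hg
    refine ⟨fun j => g - x j, fun col => ?_⟩
    have hD : regDesignB c (bstar c) (fun j => g - x j) col
        = g - regDesignB c (bstar c) x col := by
      cases col with
      | inl j => rfl
      | inr i =>
        simp only [regDesignB, Sum.elim_inr]
        have hb : (bstar c i) + bstar c i = g * (1 - ∑ j, c i j) := by
          unfold bstar
          rw [hg, ← two_gamma_eq q hq hodd]
          ring
        have h1 : (∑ j, c i j * (g - x j))
            = (∑ j, c i j) * g - ∑ j, c i j * x j := by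
          rw [Finset.sum_mul, ← Finset.sum_sub_distrib]
          exact Finset.sum_congr rfl fun j _ => by ring
        rw [h1]
        linear_combination hb
    show Wz q (regDesignB c (bstar c) (fun j => g - x j) col) = _
    rw [hD, Wz_mirror q hq hodd, ← hx col]
    rfl
  constructor
  · exact key y
  · intro h
    obtain ⟨x, hx⟩ := key _ h
    exact ⟨x, fun col => by rw [hx col]; ring⟩
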